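/- arXiv:1309.0109 — 2 statements merged into one kernel-verified Lean document; each statement's English description precedes it below -/
import Mathlib

section
/- Let $\beta_0 > 0$ and $\zeta \in (0,2)$. Then the set $\{ l \in \mathbb{R}_{>0} : \lfloor 2l+1 \rfloor / \lfloor 2 l^{1-\zeta/2}\beta_0^{-1/2} + 1 \rfloor \in 2\mathbb{N}+1 \text{ (i.e., the quotient is an odd positive integer)} \}$ is unbounded. -/
/-- Discrete intermediate value theorem: an integer-valued sequence that
increases by at most 1 per step and goes from `≤ 0` to `> 0` hits `0`. -/
lemma discrete_ivt (f : ℕ → ℤ) (a b : ℕ) (hab : a ≤ b)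
    (hstep : ∀ n, a ≤ n → f (n + 1) ≤ f n + 1)
    (ha : f a ≤ 0) (hb : 0 < f b) : ∃ k, a ≤ k ∧ f k = 0 := by
  by_contra h
  push_neg at h
  have key : ∀ n, a ≤ n → f n < 0 := by
    intro n hn
    induction n, hn using Nat.le_induction with
    | base => have := h a le_rfl; omega
    | succ n hn ih =>
      have h1 := hstep n hn
      have h2 := h (n + 1) (by omega)
      omega
  have := key b hab
  omega

/-- The set of admissible length scales `l` for which
`⌊2l+1⌋ / ⌊2 l^{1-ζ/2} β₀^{-1/2} + 1⌋` is an odd positive integer is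
unbounded. -/
theorem admissible_scales_unbounded (β₀ ζ : ℝ) (hβ₀ : 0 < β₀)
    (hζ0 : 0 < ζ) (hζ2 : ζ < 2) :
    ¬ BddAbove {l : ℝ | 0 < l ∧ ∃ m : ℕ,
      ⌊2 * l + 1⌋ = (2 * (m : ℤ) + 1) *
        ⌊2 * l ^ (1 - ζ / 2) * β₀ ^ (-(1 / 2) : ℝ) + 1⌋} := by
  rintro ⟨M, hM⟩
  set α : ℝ := 1 - ζ / 2 with hα_def
  set c : ℝ := β₀ ^ (-(1 / 2) : ℝ) with hc_def
  have hc : 0 < c := Real.rpow_pos_of_pos hβ₀ _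
  have hα0 : 0 < α := by rw [hα_def]; linarith
  have hα1 : α < 1 := by rw [hα_def]; linarith
  set b : ℕ → ℤ := fun N => ⌊2 * (((N : ℝ) - 1) / 2) ^ α * c + 1⌋ with hb_def
  -- basic properties of b
  have hbpos : ∀ N : ℕ, 1 ≤ N → 1 ≤ b N := by
    intro N hN
    have hN1 : (1 : ℝ) ≤ N := by exact_mod_cast hN
    have hx : (0 : ℝ) ≤ ((N : ℝ) - 1) / 2 := by linarith
    have h1 : (0 : ℝ) ≤ (((N : ℝ) - 1) / 2) ^ α := Real.rpow_nonneg hx α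
    have h2 : (1 : ℝ) ≤ 2 * (((N : ℝ) - 1) / 2) ^ α * c + 1 := by nlinarith
    exact Int.le_floor.mpr (by exact_mod_cast h2)
  have hbmono : ∀ N : ℕ, 1 ≤ N → b N ≤ b (N + 1) := by
    intro N hN
    simp only [hb_def]
    apply Int.floor_le_floor
    have hN1 : (1 : ℝ) ≤ N := by exact_mod_cast hN
    have hx : (0 : ℝ) ≤ ((N : ℝ) - 1) / 2 := by linarith
    have hxy : ((N : ℝ) - 1) / 2 ≤ ((((N : ℕ) + 1 : ℕ) : ℝ) - 1) / 2 := by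
      push_cast; linarith
    have h := Real.rpow_le_rpow hx hxy (le_of_lt hα0)
    nlinarith
  have hb1 : b 1 = 1 := by
    simp only [hb_def]
    norm_num [Real.zero_rpow (ne_of_gt hα0)]
  -- choose the odd factor q = 2m+1 with m large
  set m : ℕ := ⌈M⌉₊ + 1 with hm_def
  set q : ℤ := 2 * (m : ℤ) + 1 with hq_def
  have hq1 : 1 ≤ q := by rw [hq_def]; omega
  -- find N' with q * b N' < N'
  have htend : Filter.Tendsto (fun N : ℕ => (N : ℝ) ^ (1 - α)) Filter.atTop Filter.atTop :=
    (tendsto_rpow_atTop (by linarith)).comp tendsto_natCast_atTop_atTop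
  obtain ⟨N₂, hN₂⟩ := (htend.eventually_gt_atTop ((q : ℝ) * (2 * c + 1))).exists_forall_of_atTop
  set N' : ℕ := max N₂ 1 with hN'_def
  have hN₂1 : 1 ≤ N' := le_max_right _ _
  have hN'big : (q : ℝ) * (2 * c + 1) < (N' : ℝ) ^ (1 - α) := hN₂ N' (le_max_left _ _)
  have hfN' : q * b N' < (N' : ℤ) := by
    have hN'1 : (1 : ℝ) ≤ (N' : ℝ) := by exact_mod_cast hN₂1
    have hx : (0 : ℝ) ≤ ((N' : ℝ) - 1) / 2 := by linarith
    have hq0 : (0 : ℝ) ≤ (q : ℝ) := by exact_mod_cast le_trans zero_le_one hq1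
    have h1 : ((b N' : ℤ) : ℝ) ≤ 2 * (((N' : ℝ) - 1) / 2) ^ α * c + 1 := Int.floor_le _
    have h2 : (((N' : ℝ) - 1) / 2) ^ α ≤ (N' : ℝ) ^ α :=
      Real.rpow_le_rpow hx (by linarith) (le_of_lt hα0)
    have h3 : (1 : ℝ) ≤ (N' : ℝ) ^ α := by
      calc (1 : ℝ) = (1 : ℝ) ^ α := (Real.one_rpow α).symm
        _ ≤ (N' : ℝ) ^ α := Real.rpow_le_rpow zero_le_one hN'1 (le_of_lt hα0)
    have h6 : (N' : ℝ) ^ (1 - α) * (N' : ℝ) ^ α = (N' : ℝ) := by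
      rw [← Real.rpow_add (by linarith)]
      norm_num
    have key : ((q * b N' : ℤ) : ℝ) < (N' : ℝ) := by
      calc ((q * b N' : ℤ) : ℝ) = (q : ℝ) * ((b N' : ℤ) : ℝ) := by push_cast; ring
        _ ≤ (q : ℝ) * ((2 * c + 1) * (N' : ℝ) ^ α) := by
            have hb' : ((b N' : ℤ) : ℝ) ≤ (2 * c + 1) * (N' : ℝ) ^ α := by
              have := mul_le_mul_of_nonneg_left h2 hc.le
              linarith
            exact mul_le_mul_of_nonneg_left hb' hq0
        _ = (q : ℝ) * (2 * c + 1) * (N' : ℝ) ^ α := by ring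
        _ < (N' : ℝ) ^ (1 - α) * (N' : ℝ) ^ α := by
            have hpow : (0 : ℝ) < (N' : ℝ) ^ α := Real.rpow_pos_of_pos (by linarith) α
            exact mul_lt_mul_of_pos_right hN'big hpow
        _ = (N' : ℝ) := h6
    exact_mod_cast key
  -- discrete IVT on f N = N - q * b N
  obtain ⟨k, hk1, hk⟩ := discrete_ivt (fun N => (N : ℤ) - q * b N) 1 N' hN₂1
    (fun n hn => by
      have h := mul_le_mul_of_nonneg_left (hbmono n hn) (by omega : (0 : ℤ) ≤ q)
      push_cast
      linarith)
    (by simp only [Nat.cast_one, hb1, mul_one, sub_nonpos]; exact hq1)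
    (by simp only [sub_pos]; exact hfN')
  have hkq : (k : ℤ) = q * b k := by linarith
  -- the admissible scale
  set l : ℝ := ((k : ℝ) - 1) / 2 with hl_def
  have hbk1 : 1 ≤ b k := hbpos k hk1
  have hkq' : (q : ℤ) ≤ k := by nlinarith
  have hlM : M < l := by
    have h1 : ((q : ℤ) : ℝ) ≤ (k : ℝ) := by exact_mod_cast hkq'
    push_cast [hq_def, hm_def] at h1
    have h2 : M < (⌈M⌉₊ : ℝ) + 1 := by have := Nat.le_ceil M; linarith
    rw [hl_def]; linarith
  have hl0 : 0 < l := by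
    have h1 : (3 : ℤ) ≤ k := le_trans (by omega) hkq'
    have h2 : (3 : ℝ) ≤ (k : ℝ) := by exact_mod_cast h1
    rw [hl_def]; linarith
  have hmem : l ∈ {l : ℝ | 0 < l ∧ ∃ m : ℕ,
      ⌊2 * l + 1⌋ = (2 * (m : ℤ) + 1) *
        ⌊2 * l ^ (1 - ζ / 2) * β₀ ^ (-(1 / 2) : ℝ) + 1⌋} := by
    refine ⟨hl0, m, ?_⟩
    have h2l : 2 * l + 1 = (k : ℝ) := by rw [hl_def]; ring
    rw [h2l, Int.floor_natCast, hkq]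
  have := hM hmem
  linarith
end

section
/- Let $(a_n)_{n\ge1}$ and $(b_n)_{n\ge1}$ be sequences of positive integers such that $a_n \le a_{n+1} \le a_n + 1$ and $b_n \le b_{n+1} \le b_n + 1$ for all $n$, and $a_n / b_n \to \infty$. Then for every natural number $m$ with $m > a_1 / b_1$, there exists $n$ with $a_n = m\, b_n$. -/
open Filter

/-- Discrete IVT for integer sequences increasing by at most 1 per step. -/
lemma discrete_ivt_s12 (g : ℕ → ℤ) (h1 : g 1 < 0)
    (hstep : ∀ n, 1 ≤ n → g (n + 1) ≤ g n + 1) :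
    ∀ N, 1 ≤ N → 0 ≤ g N → ∃ n, 1 ≤ n ∧ g n = 0 := by
  intro N
  induction N with
  | zero => omega
  | succ k ih =>
    intro _ hgk
    rcases Nat.eq_zero_or_pos k with hk | hk
    · subst hk; simp only [Nat.zero_add] at hgk; omega
    · rcases le_or_gt 0 (g k) with h | h
      · exact ih hk h
      · exact ⟨k + 1, by omega, by have := hstep k hk; omega⟩

/-- Discrete intermediate value theorem for ratios of slowly growing integer
sequences: every natural number larger than `a 1 / b 1` is attained as an
exact quotient. (Sequences are indexed from `1`.) -/
theorem ratio_hits_every_integer (a b : ℕ → ℕ)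
    (ha_pos : ∀ n, 1 ≤ n → 0 < a n) (hb_pos : ∀ n, 1 ≤ n → 0 < b n)
    (ha_mono : ∀ n, 1 ≤ n → a n ≤ a (n + 1) ∧ a (n + 1) ≤ a n + 1)
    (hb_mono : ∀ n, 1 ≤ n → b n ≤ b (n + 1) ∧ b (n + 1) ≤ b n + 1)
    (hdiv : Tendsto (fun n => (a n : ℝ) / (b n : ℝ)) atTop atTop)
    (m : ℕ) (hm : (a 1 : ℝ) / (b 1 : ℝ) < (m : ℝ)) :
    ∃ n, 1 ≤ n ∧ a n = m * b n := by
  set g : ℕ → ℤ := fun n => (a n : ℤ) - m * b n with hg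
  have hb1 : (0 : ℝ) < (b 1 : ℝ) := by exact_mod_cast hb_pos 1 le_rfl
  have h1 : g 1 < 0 := by
    have : (a 1 : ℝ) < m * b 1 := by
      rw [div_lt_iff₀ hb1] at hm; linarith
    have : a 1 < m * b 1 := by exact_mod_cast this
    simp only [hg]; push_cast; omega
  have hstep : ∀ n, 1 ≤ n → g (n + 1) ≤ g n + 1 := by
    intro n hn
    have h1 := (ha_mono n hn).2
    have h2 := (hb_mono n hn).1
    simp only [hg]; push_cast
    nlinarith [h1, h2, Int.natCast_nonneg m]
  -- find N with g N ≥ 0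
  obtain ⟨N, hN1, hN⟩ : ∃ N, 1 ≤ N ∧ (m : ℝ) < (a N : ℝ) / (b N : ℝ) := by
    have := (hdiv.eventually (eventually_gt_atTop (m : ℝ))).and
      (eventually_ge_atTop 1)
    obtain ⟨N, hN⟩ := this.exists
    exact ⟨N, hN.2, hN.1⟩
  have hbN : (0 : ℝ) < (b N : ℝ) := by exact_mod_cast hb_pos N hN1
  have hgN : 0 ≤ g N := by
    rw [lt_div_iff₀ hbN] at hN
    have : m * b N < a N := by exact_mod_cast hN
    simp only [hg]; push_cast; omega
  obtain ⟨n, hn1, hn⟩ := discrete_ivt_s12 g h1 hstep N hN1 hgN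
  refine ⟨n, hn1, ?_⟩
  simp only [hg] at hn
  have : (a n : ℤ) = (m : ℤ) * b n := by omega
  exact_mod_cast this
end
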